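/- arXiv:1307.3477 — 4 statements merged into one kernel-verified Lean document; each statement's English description precedes it below -/
import Mathlib

section
/- In a nonstandard vector space X with null set Ω, if x ⊖ y ∈ Ω then x ≗ y. -/
/-- Subtraction x ⊖ y := x ⊕ (−1)y in a nonstandard vector space. -/
def nsSub {𝔽 X : Type*} [Field 𝔽] (add : X → X → X) (smul : 𝔽 → X → X)
    (x y : X) : X :=
  add x (smul (-1) y)

/-- The null set Ω = {z ⊖ z : z ∈ X}. -/
def nsOmega {𝔽 X : Type*} [Field 𝔽] (add : X → X → X) (smul : 𝔽 → X → X) :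
    Set X :=
  {w | ∃ z : X, w = nsSub add smul z z}

/-- Almost equality x ≗ y: x = y, or x = y ⊕ ω / x ⊕ ω = y for some ω ∈ Ω, or
x ⊕ ω₁ = y ⊕ ω₂ for some ω₁, ω₂ ∈ Ω. -/
def nsAeq {𝔽 X : Type*} [Field 𝔽] (add : X → X → X) (smul : 𝔽 → X → X)
    (x y : X) : Prop :=
  x = y ∨
    (∃ ω ∈ nsOmega add smul, x = add y ω ∨ add x ω = y) ∨
    (∃ ω₁ ∈ nsOmega add smul, ∃ ω₂ ∈ nsOmega add smul, add x ω₁ = add y ω₂)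


/-- In a nonstandard vector space, x ⊖ y ∈ Ω implies x ≗ y. -/
theorem stmt4
    {𝔽 X : Type*} [Field 𝔽] (add : X → X → X) (smul : 𝔽 → X → X)
    (hcomm : ∀ a b : X, add a b = add b a)
    (hassoc : ∀ a b c : X, add (add a b) c = add a (add b c))
    (hone : ∀ x : X, smul (1 : 𝔽) x = x) :
    ∀ x y : X, nsSub add smul x y ∈ nsOmega add smul → nsAeq add smul x y := by
  rintro x y ⟨z, hz⟩
  refine Or.inr (Or.inr ⟨nsSub add smul y y, ⟨y, rfl⟩, nsSub add smul z z, ⟨z, rfl⟩, ?_⟩)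
  have : add (add x (smul (-1) y)) y = add (nsSub add smul z z) y := congrArg (fun w => add w y) hz
  calc add x (nsSub add smul y y)
      = add (add x (smul (-1) y)) y := by
        unfold nsSub; rw [hassoc, hcomm (smul (-1) y) y]
    _ = add y (nsSub add smul z z) := by rw [this, hcomm]
end

section
/- Let (X,d) be a pseudo-metric space on a nonstandard vector space with null set Ω, where d is translation-invariant (d(x ⊕ z, y ⊕ z) = d(x,y)). Then B(x; ε) ⊕ x̂ ⊆ B(x ⊕ x̂; ε) for all x, x̂ ∈ X. If additionally d satisfies the null inequalities, X owns the null decomposition, and Ω owns the self-decomposition, then B(x ⊕ x̂; ε) = B(x; ε) ⊕ x̂. -/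
/-- The open ball B(x₀; ε) = {x : d(x, x₀) < ε}. -/
def nsBall {X : Type*} (d : X → X → ℝ) (x₀ : X) (ε : ℝ) : Set X :=
  {x | d x x₀ < ε}


/-- If d is translation-invariant then B(x; ε) ⊕ x̂ ⊆ B(x ⊕ x̂; ε); if moreover
d satisfies the null inequalities, X owns the null decomposition and Ω owns the
self-decomposition, then B(x ⊕ x̂; ε) = B(x; ε) ⊕ x̂. -/
theorem stmt14
    {𝔽 X : Type*} [Field 𝔽] (add : X → X → X) (smul : 𝔽 → X → X)
    (hcomm : ∀ a b : X, add a b = add b a)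
    (hassoc : ∀ a b c : X, add (add a b) c = add a (add b c))
    (hone : ∀ x : X, smul (1 : 𝔽) x = x)
    (d : X → X → ℝ)
    (hd : ∀ x y : X, 0 ≤ d x y)
    (hsymm : ∀ x y : X, d x y = d y x)
    (htri : ∀ x y z : X, d x y ≤ d x z + d z y)
    (htrans : ∀ x y z : X, d (add x z) (add y z) = d x y) :
    (∀ (x x' : X) (ε : ℝ),
      (fun y => add y x') '' nsBall d x ε ⊆ nsBall d (add x x') ε) ∧
    ((∀ x y : X, ∀ ω₁ ∈ nsOmega add smul, ∀ ω₂ ∈ nsOmega add smul,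
        d x y ≤ d (add x ω₁) (add y ω₂)) →
     (∀ x y : X, ∀ ω ∈ nsOmega add smul, d x y ≤ d (add x ω) y) →
     (∀ x y : X, ∀ ω ∈ nsOmega add smul, d x y ≤ d x (add y ω)) →
     (∀ x : X, ∃ x' : X, ∃ ω ∈ nsOmega add smul, x = add x' ω) →
     (∀ ω₀ ∈ nsOmega add smul, ∀ ω ∈ nsOmega add smul,
        ∃ ω' ∈ nsOmega add smul, ω = add ω' ω₀) →
     ∀ (x x' : X) (ε : ℝ),
       nsBall d (add x x') ε = (fun y => add y x') '' nsBall d x ε) := by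
  have hsub : ∀ (x x' : X) (ε : ℝ),
      (fun y => add y x') '' nsBall d x ε ⊆ nsBall d (add x x') ε := by
    rintro x x' ε y ⟨z, hz, rfl⟩
    simpa [nsBall, htrans] using hz
  refine ⟨hsub, ?_⟩
  intro _ _ _ hdec hself x x' ε
  refine Set.Subset.antisymm ?_ (hsub x x' ε)
  intro y hy
  obtain ⟨y', ω, hω, hy'⟩ := hdec y
  have hω₀ : nsSub add smul x' x' ∈ nsOmega add smul := ⟨x', rfl⟩
  obtain ⟨ω', _, hωeq⟩ := hself _ hω₀ ω hω
  refine ⟨add (add y' ω') (smul (-1) x'), ?_, ?_⟩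
  · show d _ x < ε
    have hkey : add (add (add y' ω') (smul (-1) x')) x' = y := by
      rw [hassoc, hcomm (smul (-1) x') x']
      show add (add y' ω') (nsSub add smul x' x') = y
      rw [hassoc, ← hωeq, ← hy']
    have := htrans (add (add y' ω') (smul (-1) x')) x x'
    rw [hkey] at this
    rw [← this]
    exact hy
  · show add (add (add y' ω') (smul (-1) x')) x' = y
    rw [hassoc, hcomm (smul (-1) x') x']
    show add (add y' ω') (nsSub add smul x' x') = y
    rw [hassoc, ← hωeq, ← hy']
end

section
/- Let (X,d) be a pseudo-metric space on a nonstandard vector space with null set Ω, where d satisfies the null equalities and Ω owns the self-decomposition with respect to ω₀ ∈ Ω. Then B(a; ε) ⊕ ω₀ = B(a; ε) ⊕ Ω for every open ball B(a; ε). -/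
/-- Under the null equalities, if Ω owns the self-decomposition with respect to
ω₀ ∈ Ω, then B(a; ε) ⊕ ω₀ = B(a; ε) ⊕ Ω. -/
theorem stmt15
    {𝔽 X : Type*} [Field 𝔽] (add : X → X → X) (smul : 𝔽 → X → X)
    (hcomm : ∀ a b : X, add a b = add b a)
    (hassoc : ∀ a b c : X, add (add a b) c = add a (add b c))
    (hone : ∀ x : X, smul (1 : 𝔽) x = x)
    (d : X → X → ℝ)
    (hd : ∀ x y : X, 0 ≤ d x y)
    (hsymm : ∀ x y : X, d x y = d y x)
    (htri : ∀ x y z : X, d x y ≤ d x z + d z y)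
    (hne₁ : ∀ x y : X, ∀ ω₁ ∈ nsOmega add smul, ∀ ω₂ ∈ nsOmega add smul,
      d (add x ω₁) (add y ω₂) = d x y)
    (hne₂ : ∀ x y : X, ∀ ω ∈ nsOmega add smul, d (add x ω) y = d x y)
    (hne₃ : ∀ x y : X, ∀ ω ∈ nsOmega add smul, d x (add y ω) = d x y)
    (ω₀ : X) (hω₀ : ω₀ ∈ nsOmega add smul)
    (hself₀ : ∀ ω ∈ nsOmega add smul,
      ∃ ω' ∈ nsOmega add smul, ω = add ω' ω₀) :
    ∀ (a : X) (ε : ℝ),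
      (fun x => add x ω₀) '' nsBall d a ε =
        Set.image2 add (nsBall d a ε) (nsOmega add smul) := by
  intro a ε
  ext y
  constructor
  · rintro ⟨x, hx, rfl⟩
    exact ⟨x, hx, ω₀, hω₀, rfl⟩
  · rintro ⟨x, hx, ω, hω, rfl⟩
    obtain ⟨ω', hω', rfl⟩ := hself₀ ω hω
    refine ⟨add x ω', ?_, (hassoc x ω' ω₀).symm ▸ rfl⟩
    simpa [nsBall, hne₂ x a ω' hω'] using hx
end

section
/- Let (X,d) be a pseudo-metric space on a nonstandard vector space. Every open ball B(x₀; ε) is nonstandardly open (B(x₀;ε) = int(B(x₀;ε))) and nonstandardly type-III-open; if moreover d satisfies the null equalities, then B(x₀; ε) is nonstandardly type-I-open. -/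
/-- The nonstandard interior of A. -/
def nsInt {X : Type*} (d : X → X → ℝ) (A : Set X) : Set X :=
  {x | x ∈ A ∧ ∃ ε > 0, nsBall d x ε ⊆ A}

/-- The nonstandard type-I interior of A. -/
def nsIntI {𝔽 X : Type*} [Field 𝔽] (add : X → X → X) (smul : 𝔽 → X → X)
    (d : X → X → ℝ) (A : Set X) : Set X :=
  {x | x ∈ A ∧ ∃ ε > 0, Set.image2 add (nsBall d x ε) (nsOmega add smul) ⊆ A}

/-- The nonstandard type-III interior of A. -/
def nsIntIII {𝔽 X : Type*} [Field 𝔽] (add : X → X → X) (smul : 𝔽 → X → X)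
    (d : X → X → ℝ) (A : Set X) : Set X :=
  {x | x ∈ A ∧ ∃ ε > 0, Set.image2 add (nsBall d x ε) (nsOmega add smul) ⊆
    Set.image2 add A (nsOmega add smul)}

/-- Every open ball is nonstandardly open and nonstandardly type-III-open;
under the null equalities it is also nonstandardly type-I-open. -/
theorem stmt17
    {𝔽 X : Type*} [Field 𝔽] (add : X → X → X) (smul : 𝔽 → X → X)
    (hcomm : ∀ a b : X, add a b = add b a)
    (hassoc : ∀ a b c : X, add (add a b) c = add a (add b c))
    (hone : ∀ x : X, smul (1 : 𝔽) x = x)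
    (d : X → X → ℝ)
    (hd : ∀ x y : X, 0 ≤ d x y)
    (hsymm : ∀ x y : X, d x y = d y x)
    (htri : ∀ x y z : X, d x y ≤ d x z + d z y) :
    ∀ (x₀ : X) (ε : ℝ), 0 < ε →
      nsBall d x₀ ε = nsInt d (nsBall d x₀ ε) ∧
      nsBall d x₀ ε = nsIntIII add smul d (nsBall d x₀ ε) ∧
      ((∀ x y : X, ∀ ω₁ ∈ nsOmega add smul, ∀ ω₂ ∈ nsOmega add smul,
          d (add x ω₁) (add y ω₂) = d x y) →
       (∀ x y : X, ∀ ω ∈ nsOmega add smul, d (add x ω) y = d x y) →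
       (∀ x y : X, ∀ ω ∈ nsOmega add smul, d x (add y ω) = d x y) →
       nsBall d x₀ ε = nsIntI add smul d (nsBall d x₀ ε)) := by

  intro x₀ ε hε
  have hsub : ∀ x, x ∈ nsBall d x₀ ε → nsBall d x (ε - d x x₀) ⊆ nsBall d x₀ ε := by
    intro x hx y hy
    have := htri y x₀ x
    simp only [nsBall, Set.mem_setOf_eq] at *
    linarith
  refine ⟨?_, ?_, ?_⟩
  · apply Set.Subset.antisymm
    · intro x hx
      refine ⟨hx, ε - d x x₀, by simp [nsBall, Set.mem_setOf_eq] at hx; linarith, hsub x hx⟩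
    · intro x hx; exact hx.1
  · apply Set.Subset.antisymm
    · intro x hx
      refine ⟨hx, ε - d x x₀, by simp [nsBall, Set.mem_setOf_eq] at hx; linarith, ?_⟩
      intro w hw
      obtain ⟨y, hy, ω, hω, rfl⟩ := hw
      exact ⟨y, hsub x hx hy, ω, hω, rfl⟩
    · intro x hx; exact hx.1
  · intro h12 h1 h2
    apply Set.Subset.antisymm
    · intro x hx
      refine ⟨hx, ε - d x x₀, by simp [nsBall, Set.mem_setOf_eq] at hx; linarith, ?_⟩
      intro w hw
      obtain ⟨y, hy, ω, hω, rfl⟩ := hw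
      have hy' : y ∈ nsBall d x₀ ε := hsub x hx hy
      simp only [nsBall, Set.mem_setOf_eq] at *
      rw [h1 y x₀ ω hω]; exact hy'
    · intro x hx; exact hx.1
end
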